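/- Let G be a finite abelian group with a free Brauer action on a Brauer graph (Γ, 𝔬, m), and let i be an edge incident with a vertex μ. Then there exist an integer k with 1 ≤ k ≤ val(μ), an integer s ≥ 0, and g ∈ G such that: (1) val(μ̄) = k in the orbit graph; (2) the successor sequence of i at μ is i = i₁, i₂, …, i_k, i₁^g, i₂^g, …, i_k^g, …, i₁^{g^s}, …, i_k^{g^s}; and (3) val(μ) = val(μ̄)(s+1). -/

import Mathlib

/-- A Brauer graph `(Γ, 𝔬, m)`, presented via half-edges: `H` is the (finite, nonempty)
set of half-edges, `σ` is the successor permutation whose cycle at a vertex lists the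
incident half-edges in the cyclic order `𝔬` (a loop contributes two half-edges, i.e. is
"listed twice"), `ι` is the fixed-point-free involution pairing the two half-edges of
each edge, `v` assigns to each half-edge its vertex (so the fibres of `v` are exactly
the cycles of `σ`), the graph is connected, and `m` is the multiplicity function. -/
structure BrauerGraph where
  H : Type
  V : Type
  fintypeH : Fintype H
  decEqH : DecidableEq H
  fintypeV : Fintype V
  decEqV : DecidableEq V
  nonemptyH : Nonempty H
  σ : Equiv.Perm H
  ι : Equiv.Perm H
  ι_invol : ∀ h, ι (ι h) = h
  ι_ne : ∀ h, ι h ≠ h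
  v : H → V
  v_surj : Function.Surjective v
  v_eq_iff : ∀ h h', v h = v h' ↔ ∃ n : ℤ, (σ ^ n) h = h'
  connected : ∀ h h' : H, ∃ g ∈ Subgroup.closure ({σ, ι} : Set (Equiv.Perm H)), g h = h'
  m : V → ℕ
  m_pos : ∀ μ, 0 < m μ

attribute [instance] BrauerGraph.fintypeH BrauerGraph.decEqH
attribute [instance] BrauerGraph.fintypeV BrauerGraph.decEqV

namespace BrauerGraph

variable (Γ : BrauerGraph)

/-- The valency of a vertex: the number of incident half-edges (loops counted twice). -/
noncomputable def val (μ : Γ.V) : ℕ := Nat.card {h : Γ.H // Γ.v h = μ}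

end BrauerGraph

/-- A Brauer action of a group `G` on a Brauer graph: a faithful action on half-edges
commuting with the successor permutation (i.e. orientation/successor preserving) and
with the edge involution (i.e. an action by graph automorphisms), and preserving the
multiplicity function. -/
structure BrauerAction (G : Type) [Group G] (Γ : BrauerGraph) where
  e : G →* Equiv.Perm Γ.H
  faithful : Function.Injective e
  comm_σ : ∀ g h, e g (Γ.σ h) = Γ.σ (e g h)
  comm_ι : ∀ g h, e g (Γ.ι h) = Γ.ι (e g h)
  m_inv : ∀ g h, Γ.m (Γ.v (e g h)) = Γ.m (Γ.v h)

namespace BrauerAction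

variable {G : Type} [Group G] {Γ : BrauerGraph}

/-- A free Brauer action: the action is free on the set of edges (loops counted twice,
i.e. on half-edges). -/
def IsFree (A : BrauerAction G Γ) : Prop := ∀ (g : G) (h : Γ.H), A.e g h = h → g = 1

/-- The orbit equivalence relation of the action on half-edges. -/
def orbSetoid (A : BrauerAction G Γ) : Setoid Γ.H where
  r h h' := ∃ g : G, A.e g h = h'
  iseqv := by
    refine ⟨fun h => ⟨1, by simp⟩, ?_, ?_⟩
    · rintro h h' ⟨g, hg⟩
      exact ⟨g⁻¹, by rw [← hg, ← Equiv.Perm.mul_apply, ← map_mul]; simp⟩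
    · rintro a b c ⟨g₁, hg₁⟩ ⟨g₂, hg₂⟩
      exact ⟨g₂ * g₁, by rw [map_mul, Equiv.Perm.mul_apply, hg₁, hg₂]⟩

/-- The orbit equivalence relation of the action restricted to a subset of half-edges. -/
def subOrbSetoid (A : BrauerAction G Γ) (P : Γ.H → Prop) : Setoid {h : Γ.H // P h} where
  r p q := ∃ g : G, A.e g p.1 = q.1
  iseqv := by
    refine ⟨fun p => ⟨1, by simp⟩, ?_, ?_⟩
    · rintro p q ⟨g, hg⟩
      exact ⟨g⁻¹, by rw [← hg, ← Equiv.Perm.mul_apply, ← map_mul]; simp⟩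
    · rintro a b c ⟨g₁, hg₁⟩ ⟨g₂, hg₂⟩
      exact ⟨g₂ * g₁, by rw [map_mul, Equiv.Perm.mul_apply, hg₁, hg₂]⟩

/-- The induced action of `g ∈ G` on vertices (defined via a chosen half-edge
in the fibre of the vertex). -/
noncomputable def vmap (A : BrauerAction G Γ) (g : G) (μ : Γ.V) : Γ.V :=
  Γ.v (A.e g (Γ.v_surj μ).choose)

/-- The valency, in the orbit graph `Γ/G`, of the orbit vertex `μ̄` of `μ`: the number
of `G`-orbits of half-edges incident with a vertex in the orbit of `μ`. -/
noncomputable def orbVal (A : BrauerAction G Γ) (μ : Γ.V) : ℕ :=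
  Nat.card (Quotient (A.subOrbSetoid (fun h => ∃ a : G, Γ.v (A.e a h) = μ)))

/-- The multiplicity function `m̄(μ̄) = val(μ)·m(μ)/val(μ̄)` of the orbit graph,
expressed on representatives. -/
noncomputable def mbar (A : BrauerAction G Γ) (μ : Γ.V) : ℕ :=
  Γ.val μ * Γ.m μ / A.orbVal μ

end BrauerAction

namespace BrauerGraph

variable (Γ : BrauerGraph) {G : Type} [CommGroup G]

/-- `ω_μ`: the product of the values of a successor weighting `W` over all successor
pairs at the vertex `μ` (a successor pair `(i, σ i)` is identified with the half-edge
`i`). -/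
noncomputable def omega (W : Γ.H → G) (μ : Γ.V) : G :=
  ∏ h ∈ Finset.univ.filter (fun h => Γ.v h = μ), W h

/-- `ω(i₁, i_{r+1})`: the product of the weights along the first `r` steps of the
successor sequence of the half-edge `h`. -/
noncomputable def wpath (W : Γ.H → G) (h : Γ.H) (r : ℕ) : G :=
  ∏ t ∈ Finset.range r, W ((Γ.σ ^ t) h)

/-- The generating relation for the equivalence classes `[i, H_{μ,s}]` defining the
vertices of the Brauer covering graph `Δ_W`: a pair `(i, g)` (representing the pair of
`i` and the coset `H_{v i}·g`) is related to `(σ i, g·W(i))`, and to `(i, g·ω_{v i})`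
(the latter identifies representatives of the same coset of `H_μ = ⟨ω_μ⟩`). -/
def covRel (W : Γ.H → G) : Γ.H × G → Γ.H × G → Prop := fun p q =>
  (q.1 = Γ.σ p.1 ∧ q.2 = p.2 * W p.1) ∨ (q.1 = p.1 ∧ q.2 = p.2 * Γ.omega W (Γ.v p.1))

end BrauerGraph


section Aux

variable {G : Type} [CommGroup G] {Γ : BrauerGraph} (A : BrauerAction G Γ)

lemma aux_e_comm_pow (g : G) (t : ℕ) (x : Γ.H) :
    A.e g ((Γ.σ ^ t) x) = (Γ.σ ^ t) (A.e g x) := by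
  induction t with
  | zero => simp
  | succ t ih =>
      rw [pow_succ', Equiv.Perm.mul_apply, Equiv.Perm.mul_apply, A.comm_σ, ih]

lemma aux_zcancel (σ : Equiv.Perm Γ.H) (h : Γ.H) (a b : ℤ)
    (hab : (σ ^ a) h = (σ ^ b) h) : (σ ^ (b - a)) h = h := by
  apply (σ ^ a).injective
  rw [← Equiv.Perm.mul_apply, ← zpow_add]
  have : a + (b - a) = b := by ring
  rw [this, ← hab]

lemma aux_pow_comm (σ : Equiv.Perm Γ.H) (a b : ℕ) (x : Γ.H) :
    (σ ^ a) ((σ ^ b) x) = (σ ^ b) ((σ ^ a) x) := by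
  rw [← Equiv.Perm.mul_apply, ← Equiv.Perm.mul_apply, ← pow_add, ← pow_add, add_comm]

end Aux

/-- For a free Brauer action of a finite abelian group `G` on a Brauer
graph and a (half-)edge `h` incident with the vertex `μ = v h`, there are `k`, `s`, `g`
with (1) `val(μ̄) = k`, (2) the successor sequence of `h` at `μ` is
`h, σh, …, σ^{k-1}h, h^g, …, (σ^{k-1}h)^g, …, h^{g^s}, …, (σ^{k-1}h)^{g^s}`, and
(3) `val(μ) = val(μ̄)(s+1)`. -/
theorem successor_sequence_structure {G : Type} [CommGroup G] [Fintype G]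
    (Γ : BrauerGraph) (A : BrauerAction G Γ) (hfree : A.IsFree) (h : Γ.H) :
    ∃ (k s : ℕ) (g : G),
      1 ≤ k ∧ k ≤ Γ.val (Γ.v h) ∧
      A.orbVal (Γ.v h) = k ∧
      (∀ r t : ℕ, r ≤ s → t < k →
        (Γ.σ ^ (r * k + t)) h = A.e (g ^ r) ((Γ.σ ^ t) h)) ∧
      Γ.val (Γ.v h) = A.orbVal (Γ.v h) * (s + 1) := by  classical
  set σ := Γ.σ with hσdef
  -- n : the period of h under σ
  have hPex : ∃ n : ℕ, 0 < n ∧ (σ ^ n) h = h := by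
    refine ⟨orderOf σ, orderOf_pos σ, ?_⟩
    rw [pow_orderOf_eq_one]; rfl
  set n := Nat.find hPex with hndef
  obtain ⟨hn0, hσn⟩ : 0 < n ∧ (σ ^ n) h = h := Nat.find_spec hPex
  have hnmin : ∀ m, m < n → ¬(0 < m ∧ (σ ^ m) h = h) := fun m hm => Nat.find_min hPex hm
  -- integer powers reduce mod n
  have hzfix : ∀ q : ℤ, (σ ^ ((n : ℤ) * q)) h = h := by
    intro q
    rw [zpow_mul]
    exact Equiv.Perm.zpow_apply_eq_self_of_apply_eq_self (by rw [zpow_natCast]; exact hσn) q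
  have hreduce : ∀ m : ℤ, (σ ^ m) h = (σ ^ (m % (n : ℤ)).toNat) h ∧ (m % (n : ℤ)).toNat < n := by
    intro m
    have hnz : (n : ℤ) ≠ 0 := by exact_mod_cast hn0.ne'
    have hmod : 0 ≤ m % (n : ℤ) := Int.emod_nonneg m hnz
    have hlt : m % (n : ℤ) < (n : ℤ) := Int.emod_lt_of_pos m (by exact_mod_cast hn0)
    constructor
    · have : m = m % (n : ℤ) + (n : ℤ) * (m / n) := by
        rw [add_comm]; exact (Int.mul_ediv_add_emod m n).symm
      conv_lhs => rw [this]
      rw [zpow_add, Equiv.Perm.mul_apply, hzfix, ← zpow_natCast σ (m % (n:ℤ)).toNat,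
        Int.toNat_of_nonneg hmod]
    · omega
  -- injectivity of t ↦ σ^t h on range n
  have hinj : ∀ a b : ℕ, a < n → b < n → (σ ^ a) h = (σ ^ b) h → a = b := by
    have key : ∀ a b : ℕ, a ≤ b → b < n → (σ ^ a) h = (σ ^ b) h → a = b := by
      intro a b hab hbn heq
      have heqz : (σ ^ (a : ℤ)) h = (σ ^ (b : ℤ)) h := by
        rw [zpow_natCast, zpow_natCast]; exact heq
      have hd : (σ ^ (b - a)) h = h := by
        have h2 := aux_zcancel (Γ := Γ) σ h a b heqz
        have h3 : ((b : ℤ) - (a : ℤ)) = ((b - a : ℕ) : ℤ) := by omega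
        rw [h3, zpow_natCast] at h2
        exact h2
      by_contra hne
      exact hnmin (b - a) (by omega) ⟨by omega, hd⟩
    intro a b ha hb heq
    rcases le_total a b with hab | hab
    · exact key a b hab hb heq
    · exact (key b a hab ha heq.symm).symm
  -- v is constant on the σ-orbit of h
  have hvpow : ∀ (t : ℕ) (x : Γ.H), Γ.v ((σ ^ t) x) = Γ.v x := by
    intro t x
    exact ((Γ.v_eq_iff x ((σ ^ t) x)).2 ⟨t, by rw [zpow_natCast]⟩).symm
  -- val (v h) = n
  have hval : Γ.val (Γ.v h) = n := by
    have hbij : Function.Bijective (fun t : Fin n => (⟨(σ ^ (t : ℕ)) h, hvpow t h⟩ :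
        {x : Γ.H // Γ.v x = Γ.v h})) := by
      constructor
      · intro a b hab
        exact Fin.ext (hinj a b a.isLt b.isLt (congrArg Subtype.val hab))
      · rintro ⟨x, hx⟩
        obtain ⟨m, hm⟩ := (Γ.v_eq_iff h x).1 hx.symm
        obtain ⟨hm1, hm2⟩ := hreduce m
        exact ⟨⟨(m % (n : ℤ)).toNat, hm2⟩, Subtype.ext (by simpa [← hm1] using hm)⟩
    rw [BrauerGraph.val, (Nat.card_eq_of_bijective _ hbij).symm]
    simp
  -- k : the minimal positive shift realized by the group action
  have hQex : ∃ j : ℕ, 0 < j ∧ ∃ g : G, A.e g h = (σ ^ j) h := by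
    exact ⟨n, hn0, 1, by simp [hσn]⟩
  set k := Nat.find hQex with hkdef
  obtain ⟨hk0, g, hg⟩ : 0 < k ∧ ∃ g : G, A.e g h = (σ ^ k) h := Nat.find_spec hQex
  have hkmin : ∀ m, m < k → ¬(0 < m ∧ ∃ g : G, A.e g h = (σ ^ m) h) :=
    fun m hm => Nat.find_min hQex hm
  have hkn : k ≤ n := Nat.find_min' hQex ⟨hn0, 1, by simp [hσn]⟩
  -- e (g^r) h = σ^(r*k) h
  have hepow : ∀ r : ℕ, A.e (g ^ r) h = (σ ^ (r * k)) h := by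
    intro r
    induction r with
    | zero => simp
    | succ r ih =>
        rw [pow_succ, map_mul, Equiv.Perm.mul_apply, hg, aux_e_comm_pow, ih, aux_pow_comm,
          ← Equiv.Perm.mul_apply, ← pow_add]
        congr 2
        ring
  -- k divides n
  have hdvd : k ∣ n := by
    rcases Nat.eq_zero_or_pos (n % k) with hrem | hrem
    · exact Nat.dvd_of_mod_eq_zero hrem
    · exfalso
      have hlt : n % k < k := Nat.mod_lt n hk0
      apply hkmin (n % k) hlt
      refine ⟨hrem, (g ^ (n / k))⁻¹, ?_⟩
      have h1 : A.e (g ^ (n / k)) ((σ ^ (n % k)) h) = h := by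
        rw [aux_e_comm_pow, hepow, aux_pow_comm, ← Equiv.Perm.mul_apply, ← pow_add]
        have heq : n / k * k + n % k = n := by rw [mul_comm]; exact Nat.div_add_mod n k
        rw [heq, hσn]
      calc A.e (g ^ (n / k))⁻¹ h
          = A.e (g ^ (n / k))⁻¹ (A.e (g ^ (n / k)) ((σ ^ (n % k)) h)) := by rw [h1]
        _ = (σ ^ (n % k)) h := by
            rw [← Equiv.Perm.mul_apply, ← map_mul, inv_mul_cancel, map_one]; rfl
  -- s
  set s := n / k - 1 with hsdef
  have hnk : n = k * (s + 1) := by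
    have h1 : k * (n / k) = n := Nat.mul_div_cancel' hdvd
    have h2 : 1 ≤ n / k := Nat.one_le_div_iff hk0 |>.2 hkn
    have h3 : s + 1 = n / k := by omega
    rw [h3]
    exact h1.symm
  -- property (2), unconditional
  have hprop2 : ∀ r t : ℕ, (σ ^ (r * k + t)) h = A.e (g ^ r) ((σ ^ t) h) := by
    intro r t
    rw [aux_e_comm_pow, hepow, ← Equiv.Perm.mul_apply, ← pow_add, add_comm t (r * k)]
  -- orbVal (v h) = k
  have horb : A.orbVal (Γ.v h) = k := by
    set P : Γ.H → Prop := fun x => ∃ a : G, Γ.v (A.e a x) = Γ.v h with hPdef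
    have hPmem : ∀ t : ℕ, P ((σ ^ t) h) := by
      intro t
      exact ⟨1, by rw [map_one]; exact hvpow t h⟩
    set St := A.subOrbSetoid P with hStdef
    -- the half-shift lemma for injectivity
    have hstep : ∀ (t t' : ℕ) (a : G), t ≤ t' → t' < k →
        A.e a ((σ ^ t) h) = (σ ^ t') h → t = t' := by
      intro t t' a htt' ht'k heq
      have h1 : (σ ^ t) (A.e a h) = (σ ^ t) ((σ ^ (t' - t)) h) := by
        rw [← aux_e_comm_pow, heq, ← Equiv.Perm.mul_apply, ← pow_add]
        congr 2
        omega
      have h2 : A.e a h = (σ ^ (t' - t)) h := (σ ^ t).injective h1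
      by_contra hne
      exact hkmin (t' - t) (by omega) ⟨by omega, a, h2⟩
    have hbij : Function.Bijective (fun t : Fin k =>
        (Quotient.mk St ⟨(σ ^ (t : ℕ)) h, hPmem t⟩ :
          Quotient (A.subOrbSetoid P))) := by
      constructor
      · intro t t' heq
        have hrel : St.r ⟨(σ ^ (t : ℕ)) h, hPmem t⟩ ⟨(σ ^ (t' : ℕ)) h, hPmem t'⟩ :=
          Quotient.exact heq
        obtain ⟨a, ha⟩ := hrel
        simp only at ha
        rcases le_total (t : ℕ) (t' : ℕ) with htt' | htt'
        · exact Fin.ext (hstep t t' a htt' t'.isLt ha)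
        · refine Fin.ext (hstep t' t a⁻¹ htt' t.isLt ?_).symm
          rw [← ha, ← Equiv.Perm.mul_apply, ← map_mul, inv_mul_cancel, map_one]; rfl
      · intro q
        induction q using Quotient.ind with
        | _ x =>
          obtain ⟨x, a, ha⟩ := x
          obtain ⟨m, hm⟩ := (Γ.v_eq_iff h (A.e a x)).1 ha.symm
          obtain ⟨hm1, hm2⟩ := hreduce m
          set m' := (m % (n : ℤ)).toNat with hm'def
          have hmk : m' % k < k := Nat.mod_lt m' hk0
          refine ⟨⟨m' % k, hmk⟩, ?_⟩
          apply Quotient.sound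
          refine ⟨a⁻¹ * g ^ (m' / k), ?_⟩
          simp only
          have hx : A.e a x = (σ ^ m') h := by rw [← hm, hm1]
          have hm'eq : m' / k * k + m' % k = m' := by
            rw [mul_comm]; exact Nat.div_add_mod m' k
          have h5 : A.e (g ^ (m' / k)) ((σ ^ (m' % k)) h) = A.e a x := by
            rw [← hprop2 (m' / k) (m' % k), hm'eq, ← hx]
          rw [map_mul, Equiv.Perm.mul_apply, h5, ← Equiv.Perm.mul_apply, ← map_mul,
            inv_mul_cancel, map_one]
          rfl
    rw [BrauerAction.orbVal, (Nat.card_eq_of_bijective _ hbij).symm]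
    simp
  exact ⟨k, s, g, hk0, hval ▸ hkn, horb,
    fun r t _ _ => hprop2 r t, by rw [hval, horb, hnk]⟩
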